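/- Let K_1, K_2 be fractal k-cubes of order n with digit sets D_1, D_2 and let α ∈ A_k. Then F_α = K_1 ∩ (K_2 + α) is empty if and only if for every p ≥ 0 and every chain α = α_0 ⊑ α_1 ⊑ … ⊑ α_p in A_k, the product #G_{α_0α_1} · #G_{α_1α_2} · … · #G_{α_{p−1}α_p} · #G_{α_p α_p} equals zero (where #S denotes the cardinality of a finite set S). -/

import Mathlib

open Set Pointwise MeasureTheory

noncomputable section

/-- Points of `ℝ^k`. -/
abbrev Pt (k : ℕ) := Fin k → ℝ

/-- A vector with all coordinates in `{0, 1, …, n−1}`. -/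
def IsDigit (n : ℕ) {k : ℕ} (d : Pt k) : Prop :=
  ∀ i, ∃ m : ℕ, m < n ∧ d i = (m : ℝ)

/-- A digit set: a nonempty subset of `{0, 1, …, n−1}^k`. -/
def IsDigitSet (n : ℕ) {k : ℕ} (D : Set (Pt k)) : Prop :=
  D.Nonempty ∧ ∀ d ∈ D, IsDigit n d

/-- `K` is the fractal `k`-cube of order `n` with digit set `D`:
a nonempty compact set with `nK = K + D`. -/
def IsFractalCube (n : ℕ) {k : ℕ} (D K : Set (Pt k)) : Prop :=
  K.Nonempty ∧ IsCompact K ∧ (n : ℝ) • K = K + D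

/-- `α ∈ A_k = {−1, 0, 1}^k`. -/
def IsAk {k : ℕ} (α : Pt k) : Prop :=
  ∀ i, α i = -1 ∨ α i = 0 ∨ α i = 1

/-- The unit cube `P = [0,1]^k`. -/
def unitCube (k : ℕ) : Set (Pt k) := {x | ∀ i, 0 ≤ x i ∧ x i ≤ 1}

/-- The face `P_α = P ∩ (P + α)`. -/
def face {k : ℕ} (α : Pt k) : Set (Pt k) :=
  unitCube k ∩ ((fun x => x + α) '' unitCube k)

/-- `α ⊑ β` : `β i = α i` whenever `α i ≠ 0`. -/
def SqLe {k : ℕ} (α β : Pt k) : Prop := ∀ i, α i ≠ 0 → β i = α i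

/-- `α ⊏ β`. -/
def SqLt {k : ℕ} (α β : Pt k) : Prop := SqLe α β ∧ α ≠ β

/-- `F_α = K₁ ∩ (K₂ + α)`. -/
def interF {k : ℕ} (K1 K2 : Set (Pt k)) (α : Pt k) : Set (Pt k) :=
  K1 ∩ ((fun x => x + α) '' K2)

/-- `G_{αβ} = D₁ ∩ (D₂ + nα − β)`. -/
def Gab (n : ℕ) {k : ℕ} (D1 D2 : Set (Pt k)) (α β : Pt k) : Set (Pt k) :=
  D1 ∩ ((fun x => x + ((n : ℝ) • α - β)) '' D2)

/-- `G_α = G_{αα} = D₁ ∩ (D₂ + (n−1)α)`. -/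
def Ga (n : ℕ) {k : ℕ} (D1 D2 : Set (Pt k)) (α : Pt k) : Set (Pt k) :=
  Gab n D1 D2 α α

/-- `β ≻ α` : there is a chain `α = α₀ ⊏ α₁ ⊏ … ⊏ α_p = β` in `A_k` (`p ≥ 1`)
with all `F_{α_j}` nonempty and all `G_{α_{j−1} α_j}` nonempty. -/
def GSucc (n : ℕ) {k : ℕ} (D1 D2 K1 K2 : Set (Pt k)) (β α : Pt k) : Prop :=
  ∃ p : ℕ, 0 < p ∧ ∃ c : ℕ → Pt k, c 0 = α ∧ c p = β ∧
    (∀ j ≤ p, IsAk (c j)) ∧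
    (∀ j < p, SqLt (c j) (c (j + 1))) ∧
    (∀ j ≤ p, (interF K1 K2 (c j)).Nonempty) ∧
    (∀ j < p, (Gab n D1 D2 (c j) (c (j + 1))).Nonempty)

/-- `β ≽ α`. -/
def GSuccEq (n : ℕ) {k : ℕ} (D1 D2 K1 K2 : Set (Pt k)) (β α : Pt k) : Prop :=
  GSucc n D1 D2 K1 K2 β α ∨ β = α

/-- The map `S_d(x) = (x + d)/n`. -/
def Sdig (n : ℕ) {k : ℕ} (d : Pt k) : Pt k → Pt k :=
  fun x => (n : ℝ)⁻¹ • (x + d)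

/-- The `p`-th refinement digit set
`D^(p) = { n^{p−1} d₁ + n^{p−2} d₂ + … + d_p : (d₁, …, d_p) ∈ D^p }`. -/
def refineD (n p : ℕ) {k : ℕ} (D : Set (Pt k)) : Set (Pt k) :=
  {x | ∃ f : Fin p → Pt k, (∀ j, f j ∈ D) ∧
    x = ∑ j : Fin p, ((n : ℝ) ^ (p - 1 - (j : ℕ))) • f j}

/-- A maximal vertex of the structure graph: `F_β ≠ ∅` and no `γ ≻ β`. -/
def IsMaxVertex (n : ℕ) {k : ℕ} (D1 D2 K1 K2 : Set (Pt k)) (β : Pt k) : Prop :=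
  IsAk β ∧ (interF K1 K2 β).Nonempty ∧ ¬∃ γ, IsAk γ ∧ GSucc n D1 D2 K1 K2 γ β

/-- The product `∏ #G_{α_j α_{j+1}}` over consecutive pairs of a chain. -/
def chainProd (n : ℕ) {k : ℕ} (D1 D2 : Set (Pt k)) : List (Pt k) → ℕ
  | [] => 1
  | [_] => 1
  | a :: b :: rest => (Gab n D1 D2 a b).ncard * chainProd n D1 D2 (b :: rest)

/-- A chain `α = α₁ ⊏ α₂ ⊏ … ⊏ α_p = β` inside `Γ_α` ending at a maximal vertex `β`. -/
def IsMaxChainFrom (n : ℕ) {k : ℕ} (D1 D2 K1 K2 : Set (Pt k)) (α : Pt k)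
    (c : List (Pt k)) : Prop :=
  c ≠ [] ∧ c.head? = some α ∧ List.Chain' SqLt c ∧
  (∀ β ∈ c, IsAk β ∧ GSuccEq n D1 D2 K1 K2 β α) ∧
  ∃ β, c.getLast? = some β ∧ IsMaxVertex n D1 D2 K1 K2 β


section myHelpers
variable {k n : ℕ} {D1 D2 K1 K2 : Set (Pt k)}

lemma digitSet_finite {D : Set (Pt k)} (hD : IsDigitSet n D) : D.Finite := by
  have hsub : D ⊆ Set.pi Set.univ (fun _ : Fin k => (fun m : ℕ => (m:ℝ)) '' Set.Iio n) := by
    intro d hd i _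
    obtain ⟨m, hm, he⟩ := hD.2 d hd i
    exact ⟨m, hm, he.symm⟩
  exact (Set.Finite.pi (fun _ => (Set.finite_Iio n).image _)).subset hsub

lemma cube_subset_unit (hn : 2 ≤ n) {D K : Set (Pt k)} (hD : IsDigitSet n D)
    (hK : IsFractalCube n D K) : K ⊆ unitCube k := by
  obtain ⟨hne, hcomp, heq⟩ := hK
  have hnR : (1:ℝ) ≤ (n:ℝ) - 1 := by
    have : (2:ℝ) ≤ (n:ℝ) := by exact_mod_cast hn
    linarith
  intro x hx i
  constructor
  · obtain ⟨z, hzK, hz⟩ := hcomp.exists_isMinOn hne ((continuous_apply i).continuousOn)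
    have hmem : (n:ℝ) • z ∈ K + D := by rw [← heq]; exact smul_mem_smul_set hzK
    obtain ⟨y, hy, d, hd, hyd⟩ := Set.mem_add.mp hmem
    have h1 : y i + d i = (n:ℝ) * z i := by
      have := congrFun hyd i
      simpa using this
    have h2 : z i ≤ y i := hz hy
    obtain ⟨m, _, hm⟩ := hD.2 d hd i
    have h3 : (0:ℝ) ≤ d i := by rw [hm]; positivity
    have hz0 : 0 ≤ z i := by nlinarith
    exact le_trans hz0 (hz hx)
  · obtain ⟨z, hzK, hz⟩ := hcomp.exists_isMaxOn hne ((continuous_apply i).continuousOn)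
    have hmem : (n:ℝ) • z ∈ K + D := by rw [← heq]; exact smul_mem_smul_set hzK
    obtain ⟨y, hy, d, hd, hyd⟩ := Set.mem_add.mp hmem
    have h1 : y i + d i = (n:ℝ) * z i := by
      have := congrFun hyd i
      simpa using this
    have h2 : y i ≤ z i := hz hy
    obtain ⟨m, hmn, hm⟩ := hD.2 d hd i
    have h3 : d i ≤ (n:ℝ) - 1 := by
      rw [hm]
      have : (m:ℝ) + 1 ≤ (n:ℝ) := by exact_mod_cast hmn
      linarith
    have hz1 : z i ≤ 1 := by nlinarith
    exact le_trans (hz hx) hz1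

lemma fixedPoint_mem (hn : 2 ≤ n) {D K : Set (Pt k)} (hK : IsFractalCube n D K)
    {d : Pt k} (hd : d ∈ D) : ((n:ℝ) - 1)⁻¹ • d ∈ K := by
  obtain ⟨hne, hcomp, heq⟩ := hK
  have h2 : (2:ℝ) ≤ (n:ℝ) := by exact_mod_cast hn
  have hn1 : (n:ℝ) - 1 ≠ 0 := by linarith
  set c : Pt k := ((n:ℝ) - 1)⁻¹ • d with hc
  have hnc : (n:ℝ) • c = c + d := by
    have h3 : (n:ℝ) * ((n:ℝ) - 1)⁻¹ = ((n:ℝ) - 1)⁻¹ + 1 := by field_simp; ring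
    rw [hc, smul_smul, h3, add_smul, one_smul]
  obtain ⟨z, hzK, hz⟩ := hcomp.exists_isMinOn hne
    ((Continuous.dist continuous_id continuous_const :
      Continuous fun x : Pt k => dist x c).continuousOn)
  have hmem : z + d ∈ (n:ℝ) • K := by rw [heq]; exact Set.add_mem_add hzK hd
  obtain ⟨w, hw, hweq⟩ := Set.mem_smul_set.mp hmem
  have hdist : dist z c = (n:ℝ) * dist w c := by
    have : dist ((n:ℝ) • w) ((n:ℝ) • c) = ‖(n:ℝ)‖ * dist w c := dist_smul₀ _ _ _
    rw [hweq, hnc] at this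
    simpa [Real.norm_eq_abs, abs_of_pos (by linarith : (0:ℝ) < n), dist_add_right] using this
  have hmin : dist z c ≤ dist w c := hz hw
  have hd0 : 0 ≤ dist w c := dist_nonneg
  have : dist z c = 0 := by nlinarith [hz hw, dist_nonneg (x := z) (y := c)]
  have : z = c := by rwa [dist_eq_zero] at this
  rwa [← this]

lemma interF_nonempty_of_Ga (hn : 2 ≤ n)
    (hK1 : IsFractalCube n D1 K1) (hK2 : IsFractalCube n D2 K2) {α : Pt k}
    (h : (Gab n D1 D2 α α).Nonempty) : (interF K1 K2 α).Nonempty := by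
  obtain ⟨d, hd1, d', hd2, hdd⟩ := h
  have h2 : (2:ℝ) ≤ (n:ℝ) := by exact_mod_cast hn
  have hn1 : (n:ℝ) - 1 ≠ 0 := by linarith
  refine ⟨((n:ℝ) - 1)⁻¹ • d, fixedPoint_mem hn hK1 hd1, ((n:ℝ) - 1)⁻¹ • d', fixedPoint_mem hn hK2 hd2, ?_⟩
  simp only
  rw [← hdd]
  have : (n:ℝ) • α - α = ((n:ℝ) - 1) • α := by rw [sub_smul, one_smul]
  rw [this, smul_add, smul_smul, inv_mul_cancel₀ hn1, one_smul]

lemma interF_nonempty_of_step (hn : 2 ≤ n)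
    (hK1 : IsFractalCube n D1 K1) (hK2 : IsFractalCube n D2 K2) {a b : Pt k}
    (hab : (Gab n D1 D2 a b).Nonempty) (hb : (interF K1 K2 b).Nonempty) :
    (interF K1 K2 a).Nonempty := by
  obtain ⟨d1, hd1, d2, hd2, hdd⟩ := hab
  obtain ⟨y, hyK1, y2, hy2K2, hy⟩ := hb
  have hnne : (n:ℝ) ≠ 0 := by positivity
  -- y + d1 ∈ n • K1
  have h1 : y + d1 ∈ (n:ℝ) • K1 := by
    rw [hK1.2.2]; exact Set.add_mem_add hyK1 hd1
  obtain ⟨z, hzK1, hz⟩ := Set.mem_smul_set.mp h1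
  have h2 : y2 + d2 ∈ (n:ℝ) • K2 := by
    rw [hK2.2.2]; exact Set.add_mem_add hy2K2 hd2
  obtain ⟨w, hwK2, hw⟩ := Set.mem_smul_set.mp h2
  refine ⟨z, hzK1, w, hwK2, ?_⟩
  simp only
  have key : (n:ℝ) • z = (n:ℝ) • (w + a) := by
    rw [hz, smul_add, hw, ← hdd, ← hy]
    abel_nf
    funext i
    simp only [Pi.add_apply, Pi.smul_apply, smul_eq_mul, neg_smul, one_smul, Pi.neg_apply]
    ring
  have := smul_right_injective (Pt k) hnne key
  rw [this]

lemma step_up (hn : 2 ≤ n) (hD1 : IsDigitSet n D1) (hD2 : IsDigitSet n D2)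
    (hK1 : IsFractalCube n D1 K1) (hK2 : IsFractalCube n D2 K2) {α : Pt k} (hα : IsAk α)
    (hx : (interF K1 K2 α).Nonempty) :
    ∃ β, IsAk β ∧ SqLe α β ∧ (Gab n D1 D2 α β).Nonempty ∧ (interF K1 K2 β).Nonempty := by
  obtain ⟨x, hxK1, y, hyK2, hxy⟩ := hx
  simp only at hxy
  have h1 : x + (0:Pt k) ∈ (0:Pt k) +ᵥ K1 := by simpa using hxK1
  have hmem1 : (n:ℝ) • x ∈ K1 + D1 := by rw [← hK1.2.2]; exact smul_mem_smul_set hxK1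
  obtain ⟨x1, hx1K, d1, hd1, hxe⟩ := Set.mem_add.mp hmem1
  have hmem2 : (n:ℝ) • y ∈ K2 + D2 := by rw [← hK2.2.2]; exact smul_mem_smul_set hyK2
  obtain ⟨y2, hy2K, d2, hd2, hye⟩ := Set.mem_add.mp hmem2
  set β : Pt k := x1 - y2 with hβ
  have hbeq : β = d2 + (n:ℝ) • α - d1 := by
    have h3 : x1 + d1 = y2 + d2 + (n:ℝ) • α := by
      rw [hxe, hye, ← hxy, smul_add]
    funext i
    have := congrFun h3 i
    simp only [Pi.add_apply, Pi.sub_apply, Pi.smul_apply, smul_eq_mul] at this ⊢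
    simp [hβ]
    linarith [congrFun h3 i, (by simp : (x1 + d1) i = x1 i + d1 i)]
  -- coordinatewise analysis
  have hcoord : ∀ i, (β i = -1 ∨ β i = 0 ∨ β i = 1) ∧ (α i ≠ 0 → β i = α i) := by
    intro i
    obtain ⟨m1, hm1, he1⟩ := hD1.2 d1 hd1 i
    obtain ⟨m2, hm2, he2⟩ := hD2.2 d2 hd2 i
    have hx1u := cube_subset_unit hn hD1 hK1 hx1K i
    have hy2u := cube_subset_unit hn hD2 hK2 hy2K i
    have hbi : β i = x1 i - y2 i := by simp [hβ]
    have hb1 : -1 ≤ β i := by rw [hbi]; linarith [hx1u.1, hy2u.2]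
    have hb2 : β i ≤ 1 := by rw [hbi]; linarith [hx1u.2, hy2u.1]
    have hbval : β i = (m2:ℝ) - m1 + (n:ℝ) * α i := by
      have := congrFun hbeq i
      simp only [Pi.add_apply, Pi.sub_apply, Pi.smul_apply, smul_eq_mul] at this
      rw [this, he1, he2]; ring
    rcases hα i with ha | ha | ha
    · have hz : β i = ((m2 - m1 - n : ℤ) : ℝ) := by rw [hbval, ha]; push_cast; ring
      have hzb1 : (-1:ℤ) ≤ (m2 - m1 - n : ℤ) := by exact_mod_cast hz ▸ hb1
      have hzb2 : (m2 - m1 - n : ℤ) ≤ 1 := by exact_mod_cast hz ▸ hb2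
      have : (m2 - m1 - n : ℤ) = -1 := by omega
      constructor
      · left; rw [hz, this]; norm_num
      · intro _; rw [hz, this, ha]; norm_num
    · have hz : β i = ((m2 - m1 : ℤ) : ℝ) := by rw [hbval, ha]; push_cast; ring
      have hzb1 : (-1:ℤ) ≤ (m2 - m1 : ℤ) := by exact_mod_cast hz ▸ hb1
      have hzb2 : (m2 - m1 : ℤ) ≤ 1 := by exact_mod_cast hz ▸ hb2
      constructor
      · interval_cases h : (m2 - m1 : ℤ) <;> simp [hz, h] <;> norm_num
      · intro hne; exact absurd ha hne
    · have hz : β i = ((m2 - m1 + n : ℤ) : ℝ) := by rw [hbval, ha]; push_cast; ring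
      have hzb1 : (-1:ℤ) ≤ (m2 - m1 + n : ℤ) := by exact_mod_cast hz ▸ hb1
      have hzb2 : (m2 - m1 + n : ℤ) ≤ 1 := by exact_mod_cast hz ▸ hb2
      have : (m2 - m1 + n : ℤ) = 1 := by omega
      constructor
      · right; right; rw [hz, this]; norm_num
      · intro _; rw [hz, this, ha]; norm_num
  refine ⟨β, fun i => (hcoord i).1, fun i => (hcoord i).2, ⟨d1, hd1, d2, hd2, ?_⟩, ⟨x1, hx1K, y2, hy2K, ?_⟩⟩
  · simp only
    rw [hbeq]; abel
  · simp only
    rw [hβ]; abel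

noncomputable def rankA {k : ℕ} (α : Pt k) : ℕ := (Finset.univ.filter (fun i => α i ≠ 0)).card

lemma rankA_lt {α β : Pt k} (h : SqLe α β) (hne : β ≠ α) : rankA α < rankA β := by
  apply Finset.card_lt_card
  constructor
  · intro i hi
    simp only [Finset.mem_filter, Finset.mem_univ, true_and] at hi ⊢
    rw [h i hi]; exact hi
  · intro hsub
    apply hne
    funext i
    by_cases hi : α i = 0
    · by_contra hbi
      have : i ∈ Finset.univ.filter (fun j => β j ≠ 0) := by
        simp only [Finset.mem_filter, Finset.mem_univ, true_and]
        rw [hi] at hbi; exact hbi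
      have := hsub this
      simp only [Finset.mem_filter, Finset.mem_univ, true_and] at this
      exact this hi
    · exact h i hi

lemma exists_chain (hn : 2 ≤ n) (hD1 : IsDigitSet n D1)
    (hD2 : IsDigitSet n D2) (hK1 : IsFractalCube n D1 K1) (hK2 : IsFractalCube n D2 K2) :
    ∀ (m : ℕ) (α : Pt k), IsAk α → (interF K1 K2 α).Nonempty → k ≤ m + rankA α →
    ∃ (p : ℕ) (c : ℕ → Pt k), c 0 = α ∧ (∀ j ≤ p, IsAk (c j)) ∧
      (∀ j < p, SqLe (c j) (c (j + 1))) ∧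
      (∀ j < p, (Gab n D1 D2 (c j) (c (j + 1))).Nonempty) ∧
      (Gab n D1 D2 (c p) (c p)).Nonempty := by
  intro m
  induction m with
  | zero =>
    intro α hα hF hkr
    obtain ⟨β, hβAk, hsq, hG, hFβ⟩ := step_up hn hD1 hD2 hK1 hK2 hα hF
    have hβα : β = α := by
      have hle : (Finset.univ.filter (fun i : Fin k => α i ≠ 0)).card ≤ k := by
        have := Finset.card_filter_le Finset.univ (fun i : Fin k => α i ≠ 0)
        simpa using this
      simp only [rankA, Nat.zero_add] at hkr
      have huniv : Finset.univ.filter (fun i : Fin k => α i ≠ 0) = Finset.univ :=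
        Finset.eq_univ_of_card _ (by simp only [Fintype.card_fin]; omega)
      funext i
      have hi : α i ≠ 0 := by
        have hmem : i ∈ Finset.univ.filter (fun i : Fin k => α i ≠ 0) := by
          rw [huniv]; exact Finset.mem_univ i
        simpa using hmem
      exact hsq i hi
    subst hβα
    exact ⟨0, fun _ => β, rfl, fun j _ => hβAk, by omega, by omega, hG⟩
  | succ m ih =>
    intro α hα hF hkr
    obtain ⟨β, hβAk, hsq, hG, hFβ⟩ := step_up hn hD1 hD2 hK1 hK2 hα hF
    by_cases hβα : β = α
    · subst hβα
      exact ⟨0, fun _ => β, rfl, fun j _ => hβAk, by omega, by omega, hG⟩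
    · have hr := rankA_lt hsq hβα
      obtain ⟨p, c, hc0, hak, hsqc, hGc, hGp⟩ := ih β hβAk hFβ (by omega)
      refine ⟨p + 1, fun j => if j = 0 then α else c (j - 1), by simp, ?_, ?_, ?_, ?_⟩
      · intro j hj
        by_cases h0 : j = 0
        · simpa [h0] using hα
        · simpa [h0] using hak (j - 1) (by omega)
      · intro j hj
        by_cases h0 : j = 0
        · subst h0; simpa [hc0] using hsq
        · have : j - 1 + 1 = j := by omega
          simpa [h0, this] using hsqc (j - 1) (by omega)
      · intro j hj
        by_cases h0 : j = 0
        · subst h0; simpa [hc0] using hG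
        · have : j - 1 + 1 = j := by omega
          simpa [h0, this] using hGc (j - 1) (by omega)
      · simpa using hGp

end myHelpers

/-- `F_α = ∅` iff for every chain `α = α₀ ⊑ α₁ ⊑ … ⊑ α_p` in `A_k`
the product `#G_{α₀α₁} ⋯ #G_{α_{p−1}α_p} · #G_{α_p α_p}` is zero. -/
theorem interF_empty_iff {k n : ℕ} (hk : 1 ≤ k) (hn : 2 ≤ n)
    (D1 D2 K1 K2 : Set (Pt k)) (hD1 : IsDigitSet n D1) (hD2 : IsDigitSet n D2)
    (hK1 : IsFractalCube n D1 K1) (hK2 : IsFractalCube n D2 K2)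
    (α : Pt k) (hα : IsAk α) :
    interF K1 K2 α = ∅ ↔
      ∀ (p : ℕ) (c : ℕ → Pt k), c 0 = α → (∀ j ≤ p, IsAk (c j)) →
        (∀ j < p, SqLe (c j) (c (j + 1))) →
        (∏ j ∈ Finset.range p, (Gab n D1 D2 (c j) (c (j + 1))).ncard) *
          (Gab n D1 D2 (c p) (c p)).ncard = 0 := by
  constructor
  · intro hemp p c hc0 _ _
    by_contra hne0
    have hGp : (Gab n D1 D2 (c p) (c p)).Nonempty :=
      Set.nonempty_of_ncard_ne_zero (fun h => hne0 (by rw [h, mul_zero]))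
    have hGj : ∀ j < p, (Gab n D1 D2 (c j) (c (j+1))).Nonempty := by
      intro j hj
      apply Set.nonempty_of_ncard_ne_zero
      intro h
      apply hne0
      have hz : ∏ j ∈ Finset.range p, (Gab n D1 D2 (c j) (c (j + 1))).ncard = 0 :=
        Finset.prod_eq_zero (Finset.mem_range.mpr hj) h
      rw [hz, zero_mul]
    have key : ∀ j ≤ p, (interF K1 K2 (c (p - j))).Nonempty := by
      intro j
      induction j with
      | zero => intro _; simpa using interF_nonempty_of_Ga hn hK1 hK2 hGp
      | succ j ih =>
        intro hj
        have h1 := ih (by omega)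
        have heq : p - (j+1) + 1 = p - j := by omega
        have h2 := hGj (p - (j+1)) (by omega)
        rw [heq] at h2
        exact interF_nonempty_of_step hn hK1 hK2 h2 h1
    have hfin := key p le_rfl
    simp only [Nat.sub_self, hc0] at hfin
    rw [hemp] at hfin
    exact Set.not_nonempty_empty hfin
  · intro H
    rw [← Set.not_nonempty_iff_eq_empty]
    intro hF
    obtain ⟨p, c, hc0, hak, hsqc, hGc, hGp⟩ :=
      exists_chain hn hD1 hD2 hK1 hK2 k α hα hF (by omega)
    have hzero := H p c hc0 hak hsqc
    rcases Nat.mul_eq_zero.mp hzero with h | h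
    · obtain ⟨j, hj, hj0⟩ := Finset.prod_eq_zero_iff.mp h
      have hfin : (Gab n D1 D2 (c j) (c (j+1))).Finite :=
        (digitSet_finite hD1).subset (fun x hx => hx.1)
      exact ((Set.ncard_pos hfin).mpr (hGc j (Finset.mem_range.mp hj))).ne' hj0
    · have hfin : (Gab n D1 D2 (c p) (c p)).Finite :=
        (digitSet_finite hD1).subset (fun x hx => hx.1)
      exact ((Set.ncard_pos hfin).mpr hGp).ne' h
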